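/- If N is a perfect square, then every vector a ∈ ℤ³ with ‖a‖² = N can be completed with two further vectors in ℤ³ of squared norm N to an orthogonal basis of ℝ³. -/

import Mathlib

open GaussianInt

local notation "ℤi" => GaussianInt

set_option synthInstance.maxHeartbeats 1000000 in
lemma prime_of_norm_nat_prime (π : ℤi) (p : ℕ) (hp : p.Prime) (h : π.norm = (p : ℤ)) :
    Prime π := by
  rw [← irreducible_iff_prime]
  constructor
  · rw [← Zsqrtd.norm_eq_one_iff, h]
    simpa using hp.ne_one
  · intro a b hab
    have hmn : a.norm.natAbs * b.norm.natAbs = p := by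
      rw [← Int.natAbs_mul, ← Zsqrtd.norm_mul, ← hab, h, Int.natAbs_natCast]
    rcases hp.eq_one_or_self_of_dvd a.norm.natAbs ⟨_, hmn.symm⟩ with h1 | h1
    · exact Or.inl (Zsqrtd.norm_eq_one_iff.mp h1)
    · right
      have hb1 : b.norm.natAbs = 1 := by
        rw [h1] at hmn
        have h2 : p * b.norm.natAbs = p * 1 := by rw [mul_one]; exact hmn
        exact Nat.eq_of_mul_eq_mul_left hp.pos h2
      exact Zsqrtd.norm_eq_one_iff.mp hb1

lemma star_dvd_of_dvd_star {a b : ℤi} (h : a ∣ star b) : star a ∣ b := by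
  obtain ⟨c, hc⟩ := h
  exact ⟨star c, by rw [← star_star b, hc, star_mul']⟩

set_option maxHeartbeats 1000000 in
set_option synthInstance.maxHeartbeats 1000000 in
lemma gauss_factor (A : ℕ) : ∀ (B : ℕ) (w : ℤi), 0 < A → 0 < B →
    w.norm = (A : ℤ) * (B : ℤ) →
    (∀ p : ℕ, p.Prime → p % 4 = 3 → p ∣ A → p ∣ B → False) →
    ∃ α β : ℤi, w = α * β ∧ α.norm = (A : ℤ) ∧ β.norm = (B : ℤ) := by
  induction A using Nat.strong_induction_on with
  | _ A ih =>
  intro B w hA hB hw h3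
  rcases eq_or_lt_of_le (show 1 ≤ A from hA) with h1 | h1
  · -- A = 1
    refine ⟨1, w, (one_mul w).symm, by simp [Zsqrtd.norm_one, ← h1], ?_⟩
    rw [hw, ← h1]; push_cast; ring
  · -- A ≥ 2
    set p := A.minFac with hpdef
    have hp : p.Prime := Nat.minFac_prime (by omega)
    have hpA : p ∣ A := A.minFac_dvd
    haveI : Fact p.Prime := ⟨hp⟩
    rcases hp.eq_two_or_odd with hp2 | hpodd
    · -- p = 2 : divide by 1 + i
      obtain ⟨A', hA'⟩ := hpA
      rw [hp2] at hA'
      have hA'pos : 0 < A' := by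
        rcases Nat.eq_zero_or_pos A' with h | h
        · subst h; rw [mul_zero] at hA'; omega
        · exact h
      have hnormdef : w.norm = w.re * w.re + w.im * w.im := by
        rw [Zsqrtd.norm_def]; ring
      have h2norm : Even (w.re * w.re + w.im * w.im) := by
        rw [← hnormdef, hw, hA']
        exact ⟨(A' : ℤ) * B, by push_cast; ring⟩
      have hpar : Even (w.re + w.im) := by
        rw [Int.even_add, Int.even_mul, or_self, Int.even_mul, or_self] at h2norm
        exact Int.even_add.mpr h2norm
      obtain ⟨k, hk⟩ := hpar
      set w' : ℤi := ⟨k, k - w.re⟩ with hw'def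
      have hu : w = (⟨1, 1⟩ : ℤi) * w' := by
        rw [Zsqrtd.ext_iff]
        constructor
        · simp only [Zsqrtd.re_mul, hw'def]; omega
        · simp only [Zsqrtd.im_mul, hw'def]; omega
      have hnu : (⟨1, 1⟩ : ℤi).norm = 2 := by norm_num [Zsqrtd.norm_def]
      have hmul : w.norm = 2 * w'.norm := by
        rw [hu, Zsqrtd.norm_mul, hnu]
      have hwn' : w'.norm = (A' : ℤ) * B := by
        refine (mul_left_cancel₀ (two_ne_zero) ?_).symm
        rw [← hmul, hw, hA']; push_cast; ring
      obtain ⟨α', β', e1, e2, e3⟩ := ih A' (by omega) B w' hA'pos hB hwn'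
        (fun q hq hq4 hqA' hqB => h3 q hq hq4 (hqA'.trans ⟨2, by omega⟩) hqB)
      refine ⟨⟨1, 1⟩ * α', β', by rw [hu, e1, mul_assoc], ?_, e3⟩
      rw [Zsqrtd.norm_mul, hnu, e2, hA']; push_cast; ring
    · rcases Nat.lt_or_ge (p % 4) 3 with hp4 | hp4
      · -- p % 4 = 1
        obtain ⟨u, v, huv⟩ := Nat.Prime.sq_add_sq (p := p) (by omega : p % 4 ≠ 3)
        set π : ℤi := ⟨(u : ℤ), (v : ℤ)⟩ with hπdef
        have hππ : π.norm = (p : ℤ) := by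
          rw [Zsqrtd.norm_def, ← huv]; push_cast; ring
        have hπp : Prime π := prime_of_norm_nat_prime π p hp hππ
        have hkey : π * star π = ((p : ℤ) : ℤi) := by
          rw [← hππ, Zsqrtd.norm_eq_mul_conj]
        have hpnorm : (p : ℤ) ∣ w.norm := by
          rw [hw]; exact Dvd.dvd.mul_right (Int.natCast_dvd_natCast.mpr hpA) _
        have hdvd : π ∣ w * star w := by
          rw [← Zsqrtd.norm_eq_mul_conj]
          exact dvd_trans ⟨star π, hkey.symm⟩ ((Zsqrtd.intCast_dvd_intCast _ _).mpr hpnorm)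
        have hstarn : (star π).norm = (p : ℤ) := by
          rw [← hππ, hπdef, Zsqrtd.norm_def, Zsqrtd.norm_def]
          simp only [Zsqrtd.re_star, Zsqrtd.im_star]; ring
        have hρ : ∃ ρ : ℤi, ρ ∣ w ∧ ρ.norm = (p : ℤ) := by
          rcases hπp.2.2 w (star w) hdvd with h | h
          · exact ⟨π, h, hππ⟩
          · exact ⟨star π, star_dvd_of_dvd_star h, hstarn⟩
        obtain ⟨ρ, hρw, hρn⟩ := hρ
        obtain ⟨w', hww'⟩ := hρw
        obtain ⟨A₁, hA₁⟩ := hpA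
        have hA₁pos : 0 < A₁ := by
          rcases Nat.eq_zero_or_pos A₁ with h | h
          · subst h; rw [mul_zero] at hA₁; omega
          · exact h
        have hA₁lt : A₁ < A := by
          have h2 : 2 * A₁ ≤ p * A₁ := Nat.mul_le_mul_right _ hp.two_le
          omega
        have hmul : w.norm = (p : ℤ) * w'.norm := by
          rw [hww', Zsqrtd.norm_mul, hρn]
        have hwn' : w'.norm = (A₁ : ℤ) * B := by
          refine (mul_left_cancel₀ (show (p : ℤ) ≠ 0 by exact_mod_cast hp.ne_zero) ?_).symm
          rw [← hmul, hw, hA₁]; push_cast; ring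
        obtain ⟨α', β', e1, e2, e3⟩ := ih A₁ hA₁lt B w' hA₁pos hB hwn'
          (fun q hq hq4 hqA' hqB => h3 q hq hq4 (hqA'.trans ⟨p, by rw [hA₁]; ring⟩) hqB)
        refine ⟨ρ * α', β', by rw [hww', e1, mul_assoc], ?_, e3⟩
        rw [Zsqrtd.norm_mul, hρn, e2, hA₁]; push_cast; ring
      · -- p % 4 = 3
        have hp43 : p % 4 = 3 := by omega
        have hπ : Prime ((p : ℤ) : ℤi) := by
          have := (GaussianInt.prime_iff_mod_four_eq_three_of_nat_prime p).mpr hp43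
          exact_mod_cast this
        have hpnorm : (p : ℤ) ∣ w.norm := by
          rw [hw]; exact Dvd.dvd.mul_right (Int.natCast_dvd_natCast.mpr hpA) _
        have hdvd : ((p : ℤ) : ℤi) ∣ w * star w := by
          rw [← Zsqrtd.norm_eq_mul_conj]
          exact (Zsqrtd.intCast_dvd_intCast _ _).mpr hpnorm
        have hpw : ((p : ℤ) : ℤi) ∣ w := by
          rcases hπ.2.2 w (star w) hdvd with h | h
          · exact h
          · have h2 := star_dvd_of_dvd_star h
            rwa [star_intCast] at h2
        obtain ⟨w', hww'⟩ := hpw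
        obtain ⟨A₁, hA₁⟩ := hpA
        have hpB : ¬ p ∣ B := fun h => h3 p hp hp43 ⟨A₁, hA₁⟩ h
        have hmul : w.norm = (p : ℤ) * ((p : ℤ) * w'.norm) := by
          rw [hww', Zsqrtd.norm_mul, Zsqrtd.norm_intCast]; ring
        have h6 : (A₁ : ℤ) * B = (p : ℤ) * w'.norm := by
          refine mul_left_cancel₀ (show (p : ℤ) ≠ 0 by exact_mod_cast hp.ne_zero) ?_
          rw [← hmul, hw, hA₁]; push_cast; ring
        have h7 : p ∣ A₁ * B := by
          have hd : (p : ℤ) ∣ ((A₁ * B : ℕ) : ℤ) := ⟨w'.norm, by push_cast; linarith [h6]⟩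
          exact_mod_cast hd
        have h8 : p ∣ A₁ := by
          rcases (Nat.Prime.dvd_mul hp).mp h7 with h | h
          · exact h
          · exact absurd h hpB
        obtain ⟨A₂, hA₂⟩ := h8
        rw [hA₂] at hA₁
        have hA₂pos : 0 < A₂ := by
          rcases Nat.eq_zero_or_pos A₂ with h | h
          · subst h; rw [mul_zero, mul_zero] at hA₁; omega
          · exact h
        have hA₂lt : A₂ < A := by
          have i1 : 2 * A₂ ≤ p * A₂ := Nat.mul_le_mul_right _ hp.two_le
          have i2 : 2 * (p * A₂) ≤ p * (p * A₂) := Nat.mul_le_mul_right _ hp.two_le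
          omega
        have hwn' : w'.norm = (A₂ : ℤ) * B := by
          refine (mul_left_cancel₀ (show (p : ℤ) ≠ 0 by exact_mod_cast hp.ne_zero) ?_).symm
          rw [← h6, hA₂]; push_cast; ring
        obtain ⟨α', β', e1, e2, e3⟩ := ih A₂ hA₂lt B w' hA₂pos hB hwn'
          (fun q hq hq4 hqA' hqB => h3 q hq hq4 (hqA'.trans ⟨p * p, by rw [hA₁]; ring⟩) hqB)
        refine ⟨((p : ℤ) : ℤi) * α', β', by rw [hww', e1, mul_assoc], ?_, e3⟩
        rw [Zsqrtd.norm_mul, Zsqrtd.norm_intCast, e2, hA₁]; push_cast; ring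

lemma sq_mod8 (t : ℤ) :
    (t % 2 = 0 ∧ (t ^ 2 % 8 = 0 ∨ t ^ 2 % 8 = 4)) ∨ (t % 2 = 1 ∧ t ^ 2 % 8 = 1) := by
  rcases Int.even_or_odd t with ⟨c, hc⟩ | ⟨c, hc⟩
  · left
    refine ⟨by omega, ?_⟩
    rcases Int.even_or_odd c with ⟨e, he⟩ | ⟨e, he⟩
    · left
      have h2 : t ^ 2 = 8 * (2 * (e * e)) := by rw [hc, he]; ring
      rw [h2]; exact Int.mul_emod_right 8 _
    · right
      have h2 : t ^ 2 = 4 + 8 * (2 * (e * e) + 2 * e) := by rw [hc, he]; ring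
      rw [h2, Int.add_mul_emod_self_left]; norm_num
  · right
    refine ⟨by omega, ?_⟩
    obtain ⟨e, he⟩ := Int.even_mul_succ_self c
    have h2 : t ^ 2 = 1 + 8 * e := by subst hc; linear_combination 4 * he
    rw [h2, Int.add_mul_emod_self_left]; norm_num

set_option maxHeartbeats 1000000 in
set_option synthInstance.maxHeartbeats 1000000 in
lemma key_lemma (n x y z : ℤ) (hn : 0 < n) (hx : x % 2 = 1) (hy : y % 2 = 0) (hz : z % 2 = 0)
    (hs : x ^ 2 + y ^ 2 + z ^ 2 = n ^ 2)
    (hprim : ∀ p : ℕ, p.Prime → (p : ℤ) ∣ x → (p : ℤ) ∣ y → (p : ℤ) ∣ z → False) :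
    ∃ b1 b2 b3 c1 c2 c3 : ℤ,
      b1 ^ 2 + b2 ^ 2 + b3 ^ 2 = n ^ 2 ∧ c1 ^ 2 + c2 ^ 2 + c3 ^ 2 = n ^ 2 ∧
      x * b1 + y * b2 + z * b3 = 0 ∧ b1 * c1 + b2 * c2 + b3 * c3 = 0 ∧
      c1 * x + c2 * y + c3 * z = 0 := by
  by_cases hyz : y = 0 ∧ z = 0
  · obtain ⟨hy0, hz0⟩ := hyz
    subst hy0; subst hz0
    exact ⟨0, n, 0, 0, 0, n, by ring, by ring, by ring, by ring, by ring⟩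
  · have hyzpos : 0 < y ^ 2 + z ^ 2 := by
      rcases (not_and_or.mp hyz) with h | h
      · have h1 : 0 < y ^ 2 := by positivity
        nlinarith [sq_nonneg z]
      · have h1 : 0 < z ^ 2 := by positivity
        nlinarith [sq_nonneg y]
    have hx2 : x ^ 2 < n ^ 2 := by nlinarith
    have hxn1 : x < n := by nlinarith
    have hxn2 : -n < x := by nlinarith
    have hnodd : n % 2 = 1 := by
      have Hx := sq_mod8 x; have Hy := sq_mod8 y; have Hz := sq_mod8 z; have Hn := sq_mod8 n
      obtain ⟨X, hX⟩ : ∃ X, x ^ 2 = X := ⟨_, rfl⟩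
      obtain ⟨Y, hY⟩ : ∃ Y, y ^ 2 = Y := ⟨_, rfl⟩
      obtain ⟨Z, hZ⟩ : ∃ Z, z ^ 2 = Z := ⟨_, rfl⟩
      obtain ⟨W, hW⟩ : ∃ W, n ^ 2 = W := ⟨_, rfl⟩
      rw [hX] at Hx; rw [hY] at Hy; rw [hZ] at Hz; rw [hW] at Hn
      rw [hX, hY, hZ, hW] at hs
      omega
    obtain ⟨k, hk⟩ : ∃ k, x = 2 * k - n := ⟨(n + x) / 2, by omega⟩
    subst hk
    obtain ⟨g, hg⟩ : ∃ g, y = 2 * g := ⟨y / 2, by omega⟩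
    obtain ⟨h, hh⟩ : ∃ h, z = 2 * h := ⟨z / 2, by omega⟩
    subst hg; subst hh
    have hkpos : 0 < k := by omega
    have hk'pos : 0 < n - k := by omega
    set A := k.toNat with hA
    set B := (n - k).toNat with hB
    have hAk : (A : ℤ) = k := Int.toNat_of_nonneg (by omega)
    have hBk : (B : ℤ) = n - k := Int.toNat_of_nonneg (by omega)
    have hgh : h * h + g * g = k * (n - k) := by nlinarith [hs]
    set w : ℤi := ⟨-h, g⟩ with hwdef
    have hwn : w.norm = (A : ℤ) * (B : ℤ) := by
      rw [Zsqrtd.norm_def, hAk, hBk]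
      show -h * -h - -1 * g * g = k * (n - k)
      linarith [hgh]
    have h3 : ∀ p : ℕ, p.Prime → p % 4 = 3 → p ∣ A → p ∣ B → False := by
      intro p hp hp4 hpA hpB
      haveI : Fact p.Prime := ⟨hp⟩
      have hpk : (p : ℤ) ∣ k := by rw [← hAk]; exact_mod_cast hpA
      have hpk' : (p : ℤ) ∣ n - k := by rw [← hBk]; exact_mod_cast hpB
      have hpn : (p : ℤ) ∣ n := by have := dvd_add hpk hpk'; simpa using this
      have hpx : (p : ℤ) ∣ 2 * k - n := dvd_sub (Dvd.dvd.mul_left hpk 2) hpn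
      have hpnorm : (p : ℤ) ∣ w.norm := by
        rw [hwn]
        exact Dvd.dvd.mul_right (by exact_mod_cast hpA) _
      have hπ : Prime ((p : ℤ) : ℤi) := by
        have := (GaussianInt.prime_iff_mod_four_eq_three_of_nat_prime p).mpr hp4
        exact_mod_cast this
      have hdvd : ((p : ℤ) : ℤi) ∣ w * star w := by
        rw [← Zsqrtd.norm_eq_mul_conj]
        exact (Zsqrtd.intCast_dvd_intCast _ _).mpr hpnorm
      have hpw : ((p : ℤ) : ℤi) ∣ w := by
        rcases hπ.2.2 w (star w) hdvd with h' | h'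
        · exact h'
        · have h2 := star_dvd_of_dvd_star h'
          rwa [star_intCast] at h2
      rw [Zsqrtd.intCast_dvd] at hpw
      obtain ⟨hpre, hpim⟩ := hpw
      have hph : (p : ℤ) ∣ h := by
        have h4 : (p : ℤ) ∣ -h := hpre
        exact (dvd_neg).mp h4
      have hpg : (p : ℤ) ∣ g := hpim
      exact hprim p hp hpx (Dvd.dvd.mul_left hpg 2) (Dvd.dvd.mul_left hph 2)
    obtain ⟨α, β, hαβ, hαn, hβn⟩ := gauss_factor A B w (by omega) (by omega) hwn h3
    have hPQ : α.re * α.re + α.im * α.im = k := by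
      have h5 := hαn; rw [Zsqrtd.norm_def, hAk] at h5; linarith
    have hRS : β.re * β.re + β.im * β.im = n - k := by
      have h5 := hβn; rw [Zsqrtd.norm_def, hBk] at h5; linarith
    have hre : α.re * β.re - α.im * β.im = -h := by
      have h5 := congrArg Zsqrtd.re hαβ
      rw [Zsqrtd.re_mul] at h5
      have h6 : (-h : ℤ) = α.re * β.re + -1 * α.im * β.im := h5
      linarith
    have him : α.re * β.im + α.im * β.re = g := by
      have h5 := congrArg Zsqrtd.im hαβ
      rw [Zsqrtd.im_mul] at h5
      have h6 : (g : ℤ) = α.re * β.im + α.im * β.re := h5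
      linarith
    set P := α.re; set Q := α.im; set R := β.re; set S := β.im
    have hn' : n = P * P + Q * Q + R * R + S * S := by linarith
    have hk2 : k = P * P + Q * Q := hPQ.symm
    have hg2 : g = P * S + Q * R := him.symm
    have hh2 : h = Q * S - P * R := by linarith
    subst hn'; subst hk2; subst hg2; subst hh2
    refine ⟨2 * (Q * R - P * S), P * P - Q * Q + R * R - S * S, 2 * (R * S + P * Q),
            2 * (Q * S + P * R), 2 * (R * S - P * Q), P * P - Q * Q - R * R + S * S,
            by ring, by ring, by ring, by ring, by ring⟩

set_option maxHeartbeats 1000000 in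
lemma flat_lemma : ∀ (N : ℕ) (n x y z : ℤ), n.natAbs ≤ N → 0 < n →
    x ^ 2 + y ^ 2 + z ^ 2 = n ^ 2 →
    ∃ b1 b2 b3 c1 c2 c3 : ℤ,
      b1 ^ 2 + b2 ^ 2 + b3 ^ 2 = n ^ 2 ∧ c1 ^ 2 + c2 ^ 2 + c3 ^ 2 = n ^ 2 ∧
      x * b1 + y * b2 + z * b3 = 0 ∧ b1 * c1 + b2 * c2 + b3 * c3 = 0 ∧
      c1 * x + c2 * y + c3 * z = 0 := by
  intro N
  induction N with
  | zero => intro n x y z hN hn hs; omega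
  | succ N ih =>
    intro n x y z hN hn hs
    set G := Int.gcd x (Int.gcd y z) with hG
    rcases Nat.lt_or_ge G 2 with hG2 | hG2
    · rcases Nat.lt_or_ge G 1 with hG0 | hG1
      · -- G = 0 : x = y = z = 0, contradiction
        have h0 : G = 0 := by omega
        rw [hG] at h0
        rw [Int.gcd_eq_zero_iff] at h0
        obtain ⟨hx0, h0'⟩ := h0
        have h0'' : Int.gcd y z = 0 := by exact_mod_cast h0'
        rw [Int.gcd_eq_zero_iff] at h0''
        obtain ⟨hy0, hz0⟩ := h0''
        subst hx0; subst hy0; subst hz0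
        nlinarith
      · -- G = 1 : primitive
        have hG1' : G = 1 := by omega
        have hprim : ∀ p : ℕ, p.Prime → (p : ℤ) ∣ x → (p : ℤ) ∣ y → (p : ℤ) ∣ z → False := by
          intro p hp h1 h2 h3
          have hd : (p : ℤ) ∣ (G : ℤ) := by
            rw [hG]; exact Int.dvd_coe_gcd h1 (Int.dvd_coe_gcd h2 h3)
          rw [hG1'] at hd
          have : p ∣ 1 := by exact_mod_cast hd
          exact hp.ne_one (Nat.dvd_one.mp this)
        have hnotall : ¬ (x % 2 = 0 ∧ y % 2 = 0 ∧ z % 2 = 0) := by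
          rintro ⟨h1, h2, h3⟩
          have hd : (2 : ℤ) ∣ (G : ℤ) := by
            rw [hG]
            exact Int.dvd_coe_gcd (by omega) (Int.dvd_coe_gcd (by omega) (by omega))
          rw [hG1'] at hd
          norm_num at hd
        have hpar : (x % 2 = 1 ∧ y % 2 = 0 ∧ z % 2 = 0) ∨
            (y % 2 = 1 ∧ z % 2 = 0 ∧ x % 2 = 0) ∨
            (z % 2 = 1 ∧ x % 2 = 0 ∧ y % 2 = 0) := by
          have Hx := sq_mod8 x; have Hy := sq_mod8 y; have Hz := sq_mod8 z
          have Hn := sq_mod8 n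
          obtain ⟨X, hX⟩ : ∃ X, x ^ 2 = X := ⟨_, rfl⟩
          obtain ⟨Y, hY⟩ : ∃ Y, y ^ 2 = Y := ⟨_, rfl⟩
          obtain ⟨Z, hZ⟩ : ∃ Z, z ^ 2 = Z := ⟨_, rfl⟩
          obtain ⟨W, hW⟩ : ∃ W, n ^ 2 = W := ⟨_, rfl⟩
          rw [hX] at Hx; rw [hY] at Hy; rw [hZ] at Hz; rw [hW] at Hn
          rw [hX, hY, hZ, hW] at hs
          omega
        rcases hpar with ⟨h1, h2, h3⟩ | ⟨h1, h2, h3⟩ | ⟨h1, h2, h3⟩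
        · obtain ⟨b1, b2, b3, c1, c2, c3, e1, e2, e3, e4, e5⟩ :=
            key_lemma n x y z hn h1 h2 h3 hs hprim
          exact ⟨b1, b2, b3, c1, c2, c3, e1, e2, e3, e4, e5⟩
        · obtain ⟨b1, b2, b3, c1, c2, c3, e1, e2, e3, e4, e5⟩ :=
            key_lemma n y z x hn h1 h2 h3 (by linarith)
              (fun p hp d1 d2 d3 => hprim p hp d3 d1 d2)
          exact ⟨b3, b1, b2, c3, c1, c2, by linarith, by linarith, by linarith, by linarith,
            by linarith⟩
        · obtain ⟨b1, b2, b3, c1, c2, c3, e1, e2, e3, e4, e5⟩ :=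
            key_lemma n z x y hn h1 h2 h3 (by linarith)
              (fun p hp d1 d2 d3 => hprim p hp d2 d3 d1)
          exact ⟨b2, b3, b1, c2, c3, c1, by linarith, by linarith, by linarith, by linarith,
            by linarith⟩
    · -- G ≥ 2 : divide out and recurse
      have hdx : ((G : ℤ)) ∣ x := by rw [hG]; exact Int.gcd_dvd_left _ _
      have hdyz : ((G : ℤ)) ∣ (Int.gcd y z : ℤ) := by rw [hG]; exact Int.gcd_dvd_right _ _
      have hdy : ((G : ℤ)) ∣ y := hdyz.trans (Int.gcd_dvd_left _ _)
      have hdz : ((G : ℤ)) ∣ z := hdyz.trans (Int.gcd_dvd_right _ _)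
      obtain ⟨x', hx'⟩ := hdx
      obtain ⟨y', hy'⟩ := hdy
      obtain ⟨z', hz'⟩ := hdz
      set d : ℤ := (G : ℤ) with hd
      have hd2 : (2 : ℤ) ≤ d := by rw [hd]; exact_mod_cast hG2
      have hdsq : d ^ 2 ∣ n ^ 2 := ⟨x' ^ 2 + y' ^ 2 + z' ^ 2, by rw [← hs, hx', hy', hz']; ring⟩
      have hGn : G ∣ n.natAbs := by
        have h1 : (d ^ 2).natAbs ∣ (n ^ 2).natAbs := Int.natAbs_dvd_natAbs.mpr hdsq
        rw [Int.natAbs_pow, Int.natAbs_pow] at h1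
        have h2 : d.natAbs = G := by rw [hd]; exact Int.natAbs_natCast G
        rw [h2] at h1
        exact (Nat.pow_dvd_pow_iff (two_ne_zero)).mp h1
      have hdn : d ∣ n := by
        rw [hd]
        refine Int.natAbs_dvd_natAbs.mp ?_
        rw [Int.natAbs_natCast]
        exact hGn
      obtain ⟨n', hn'⟩ := hdn
      have hn'pos : 0 < n' := by
        rcases le_or_gt n' 0 with h | h
        · have h5 : d * n' ≤ 0 := mul_nonpos_of_nonneg_of_nonpos (by omega) h
          omega
        · exact h
      have hs' : x' ^ 2 + y' ^ 2 + z' ^ 2 = n' ^ 2 := by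
        have hd0 : d ≠ 0 := by omega
        refine mul_left_cancel₀ (pow_ne_zero 2 hd0) ?_
        have h9 : (d * x') ^ 2 + (d * y') ^ 2 + (d * z') ^ 2 = (d * n') ^ 2 := by
          rw [← hx', ← hy', ← hz', ← hn']; exact hs
        linear_combination h9
      have hNle : n'.natAbs ≤ N := by
        have hnat : n.natAbs = G * n'.natAbs := by
          rw [hn', Int.natAbs_mul, hd, Int.natAbs_natCast]
        have hn'1 : 1 ≤ n'.natAbs := by omega
        have i1 : 2 * n'.natAbs ≤ G * n'.natAbs := Nat.mul_le_mul_right _ (by omega)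
        omega
      obtain ⟨b1, b2, b3, c1, c2, c3, e1, e2, e3, e4, e5⟩ := ih n' x' y' z' hNle hn'pos hs'
      refine ⟨d * b1, d * b2, d * b3, d * c1, d * c2, d * c3, ?_, ?_, ?_, ?_, ?_⟩
      · rw [hn']; linear_combination (d ^ 2) * e1
      · rw [hn']; linear_combination (d ^ 2) * e2
      · rw [hx', hy', hz']; linear_combination (d ^ 2) * e3
      · linear_combination (d ^ 2) * e4
      · rw [hx', hy', hz']; linear_combination (d ^ 2) * e5

/-- If `N = n²` is a positive perfect square, then every `a ∈ ℤ³` with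
`‖a‖² = N` can be completed with two further integer vectors of squared norm
`N` to an orthogonal basis of `ℝ³`. -/
theorem complete_basis_dim3_square (n : ℤ) (hn : 0 < n)
    (a : Fin 3 → ℤ) (ha : ∑ i, (a i) ^ 2 = n ^ 2) :
    ∃ b c : Fin 3 → ℤ,
      (∑ i, (b i) ^ 2 = n ^ 2) ∧ (∑ i, (c i) ^ 2 = n ^ 2) ∧
      (∑ i, a i * b i = 0) ∧ (∑ i, b i * c i = 0) ∧ (∑ i, c i * a i = 0) := by
  rw [Fin.sum_univ_three] at ha
  obtain ⟨b1, b2, b3, c1, c2, c3, e1, e2, e3, e4, e5⟩ :=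
    flat_lemma n.natAbs n (a 0) (a 1) (a 2) (le_refl _) hn ha
  refine ⟨![b1, b2, b3], ![c1, c2, c3], ?_, ?_, ?_, ?_, ?_⟩ <;>
    simp only [Fin.sum_univ_three, Matrix.cons_val_zero, Matrix.cons_val_one, Matrix.head_cons,
      Matrix.cons_val_two, Matrix.tail_cons]
  · exact e1
  · exact e2
  · exact e3
  · exact e4
  · exact e5
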